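/- Let κ ≥ 1 and let u : ℝ → ℝ be a bounded, twice continuously differentiable, 2π-periodic solution of κ² u'' + u − u³ = 0 on ℝ. Then u ≡ 0, u ≡ 1, or u ≡ −1. -/

import Mathlib

open Real MeasureTheory Set

noncomputable section

/-- An odd zero-up ground state for parameter `κ`: a `2π`-periodic, odd, twice
continuously differentiable function `U : ℝ → ℝ` satisfying
`κ² U'' + U − U³ = 0` on `ℝ`, with `U' > 0` on `[0, π/2)` and `U' < 0` on `(π/2, π]`. -/
def IsOddZeroUpGroundState (κ : ℝ) (U : ℝ → ℝ) : Prop :=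
  ContDiff ℝ 2 U ∧
  Function.Periodic U (2 * π) ∧
  (∀ x : ℝ, U (-x) = - U x) ∧
  (∀ x : ℝ, κ ^ 2 * deriv (deriv U) x + U x - U x ^ 3 = 0) ∧
  (∀ x ∈ Set.Ico (0 : ℝ) (π / 2), 0 < deriv U x) ∧
  (∀ x ∈ Set.Ioc (π / 2) π, deriv U x < 0)

/-- The Allen–Cahn energy with diffusion coefficient `κ`. -/
def energy (κ : ℝ) (u : ℝ → ℝ) : ℝ :=
  ∫ x in (-π)..π, (κ ^ 2 / 2 * (deriv u x) ^ 2 + (1 - u x ^ 2) ^ 2 / 4)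

/-- The `L²` norm over one period `(-π, π)`. -/
def L2norm (f : ℝ → ℝ) : ℝ := Real.sqrt (∫ x in (-π)..π, (f x) ^ 2)

/-- The `H¹` norm over one period `(-π, π)`. -/
def H1norm (f : ℝ → ℝ) : ℝ := Real.sqrt (L2norm f ^ 2 + L2norm (deriv f) ^ 2)

open AddCircle Complex intervalIntegral

local instance : Fact (0 < 2 * π) := ⟨by positivity⟩

def circLift (h : ℝ → ℂ) : AddCircle (2 * π) → ℂ := AddCircle.liftIco (2 * π) (-π) h

lemma circLift_coe {h : ℝ → ℂ} (hper : Function.Periodic h (2 * π)) (x : ℝ) :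
    circLift h (x : ℝ) = h x := by
  have hp : (0:ℝ) < 2 * π := by positivity
  have h1 : toIcoMod hp (-π) x ∈ Ico (-π) (-π + 2 * π) := toIcoMod_mem_Ico _ _ x
  have h2 : ((toIcoMod hp (-π) x : ℝ) : AddCircle (2*π)) = (x : ℝ) := by
    rw [toIcoMod]
    exact (QuotientAddGroup.eq_iff_sub_mem).2 (by
      simpa using AddSubgroup.zsmul_mem _ (AddSubgroup.mem_zmultiples (2*π)) (toIcoDiv hp (-π) x))
  rw [circLift, ← h2, AddCircle.liftIco_coe_apply h1]
  rw [toIcoMod, Function.Periodic.sub_zsmul_eq hper]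

lemma circLift_continuous {h : ℝ → ℂ} (hc : Continuous h)
    (hper : Function.Periodic h (2 * π)) : Continuous (circLift h) :=
  AddCircle.liftIco_continuous (by rw [(hper (-π)).symm]) hc.continuousOn

lemma neg_pi_lt_pi : (-π : ℝ) < π := by linarith [pi_pos]

lemma fourierCoeff_circLift {h : ℝ → ℂ} (hper : Function.Periodic h (2 * π)) (n : ℤ) :
    fourierCoeff (circLift h) n = fourierCoeffOn neg_pi_lt_pi h n := by
  rw [fourierCoeff_eq_intervalIntegral (circLift h) n (-π), fourierCoeffOn_eq_integral]
  rw [show (-π) + 2 * π = π by ring]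
  congr 1
  · rw [show (π : ℝ) - -π = 2 * π by ring]
  refine intervalIntegral.integral_congr fun x _ => ?_
  rw [circLift_coe hper, fourier_coe_apply, fourier_coe_apply,
    show ((π - -π : ℝ) : ℂ) = ((2 * π : ℝ) : ℂ) by push_cast; ring]

lemma parseval_circLift {h : ℝ → ℂ} (hc : Continuous h)
    (hper : Function.Periodic h (2 * π)) :
    Summable (fun n : ℤ => ‖fourierCoeff (circLift h) n‖ ^ 2) ∧
    (2 * π) * ∑' n : ℤ, ‖fourierCoeff (circLift h) n‖ ^ 2
      = ∫ x in (-π)..π, ‖h x‖ ^ 2 := by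
  set H : C(AddCircle (2 * π), ℂ) := ⟨circLift h, circLift_continuous hc hper⟩ with hH
  set HL : Lp ℂ 2 (@haarAddCircle (2 * π) _) :=
    ContinuousMap.toLp (E := ℂ) 2 haarAddCircle ℂ H with hHL
  have hcoe : fourierCoeff (circLift h) = fun n => fourierCoeff (HL : AddCircle (2*π) → ℂ) n := by
    funext n
    rw [hHL, fourierCoeff_toLp]
    rfl
  have hsum : Summable (fun n : ℤ => ‖fourierCoeff (HL : AddCircle (2*π) → ℂ) n‖ ^ 2) := by
    have hm := lp.memℓp (fourierBasis.repr HL)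
    have := hm.summable (by norm_num : (0:ℝ) < (2 : ENNReal).toReal)
    simp_rw [fourierBasis_repr] at this
    have h2 : ∀ x : ℂ, ‖x‖ ^ ((2 : ENNReal).toReal) = ‖x‖ ^ 2 := by
      intro x
      rw [show ((2:ENNReal).toReal) = ((2:ℕ):ℝ) by norm_num, Real.rpow_natCast]
    simpa [h2] using this
  have hpar := tsum_sq_fourierCoeff HL
  have hint : ∫ t : AddCircle (2*π), ‖(HL : AddCircle (2*π) → ℂ) t‖ ^ 2 ∂haarAddCircle
      = ∫ t : AddCircle (2*π), ‖H t‖ ^ 2 ∂haarAddCircle := by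
    apply MeasureTheory.integral_congr_ae
    filter_upwards [ContinuousMap.coeFn_toLp (p := 2) (𝕜 := ℂ) haarAddCircle H] with t ht
    rw [ht]
  have hperiod : ∫ x in (-π)..(-π + 2*π), ‖circLift h (x : ℝ)‖ ^ 2
      = ∫ b : AddCircle (2*π), ‖circLift h b‖ ^ 2 ∂(volume) :=
    AddCircle.intervalIntegral_preimage (2*π) (-π) (fun b => ‖circLift h b‖ ^ 2)
  have hvol : ∫ b : AddCircle (2*π), ‖circLift h b‖ ^ 2 ∂(volume)
      = (2*π) * ∫ b : AddCircle (2*π), ‖circLift h b‖ ^ 2 ∂haarAddCircle := by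
    rw [volume_eq_smul_haarAddCircle, MeasureTheory.integral_smul_measure, ENNReal.toReal_ofReal (by positivity)]
    rfl
  have hIcc : ∫ x in (-π)..(-π + 2*π), ‖circLift h (x : ℝ)‖ ^ 2 = ∫ x in (-π)..π, ‖h x‖ ^ 2 := by
    rw [show (-π) + 2*π = π by ring]
    exact intervalIntegral.integral_congr fun x _ => by rw [circLift_coe hper]
  constructor
  · rw [hcoe]; exact hsum
  · rw [hcoe, hpar, hint, ← hIcc, hperiod, hvol]
    rfl

lemma wirtinger {g g' : ℝ → ℝ} (hg : Continuous g) (hg' : Continuous g')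
    (hd : ∀ x, HasDerivAt g (g' x) x) (hper : Function.Periodic g (2 * π))
    (hper' : Function.Periodic g' (2 * π))
    (hmean : ∫ x in (-π)..π, g x = 0) :
    ∫ x in (-π)..π, g x ^ 2 ≤ ∫ x in (-π)..π, g' x ^ 2 := by
  set G : ℝ → ℂ := fun x => (g x : ℂ) with hG
  set G' : ℝ → ℂ := fun x => (g' x : ℂ) with hG'
  have hGc : Continuous G := Complex.continuous_ofReal.comp hg
  have hGc' : Continuous G' := Complex.continuous_ofReal.comp hg'
  have hGper : Function.Periodic G (2 * π) := fun x => by simp [hG, hper x]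
  have hGper' : Function.Periodic G' (2 * π) := fun x => by simp [hG', hper' x]
  obtain ⟨sumC, parC⟩ := parseval_circLift hGc hGper
  obtain ⟨sumD, parD⟩ := parseval_circLift hGc' hGper'
  -- coefficient of derivative
  have hGd : ∀ x, HasDerivAt G (G' x) x := fun x => (hd x).ofReal_comp
  have hrel : ∀ n : ℤ, n ≠ 0 →
      (Complex.I * n) * fourierCoeff (circLift G) n = fourierCoeff (circLift G') n := by
    intro n hn
    have hint : IntervalIntegrable G' volume (-π) π := hGc'.intervalIntegrable _ _
    have h1 := fourierCoeffOn_of_hasDerivAt neg_pi_lt_pi hn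
      (fun x _ => hGd x) hint
    have hend : G π = G (-π) := by
      rw [← hGper (-π)]
      congr 1
      ring
    rw [hend, sub_self, mul_zero, zero_sub] at h1
    rw [fourierCoeff_circLift hGper, fourierCoeff_circLift hGper', h1]
    have hπ : ((π : ℝ) : ℂ) ≠ 0 := by
      simpa using Real.pi_ne_zero
    have hn' : ((n : ℤ) : ℂ) ≠ 0 := by
      simpa using hn
    field_simp
    push_cast
    ring
  have hc0 : fourierCoeff (circLift G) 0 = 0 := by
    rw [fourierCoeff_circLift hGper, fourierCoeffOn_eq_integral]
    simp only [neg_zero, fourier_zero, one_smul]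
    rw [hG, intervalIntegral.integral_ofReal, hmean]
    simp
  have key : ∀ n : ℤ, ‖fourierCoeff (circLift G) n‖ ^ 2 ≤ ‖fourierCoeff (circLift G') n‖ ^ 2 := by
    intro n
    rcases eq_or_ne n 0 with rfl | hn
    · rw [hc0]
      simpa using sq_nonneg ‖fourierCoeff (circLift G') 0‖
    · rw [← hrel n hn]
      have h1 : (1 : ℝ) ≤ |(n : ℝ)| := by
        rw [← Int.cast_abs]
        exact_mod_cast Int.one_le_abs hn
      have h2 : ‖(Complex.I * n) * fourierCoeff (circLift G) n‖
          = |(n : ℝ)| * ‖fourierCoeff (circLift G) n‖ := by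
        simp [norm_mul]
      rw [h2]
      have h3 : ‖fourierCoeff (circLift G) n‖ ≤ |(n : ℝ)| * ‖fourierCoeff (circLift G) n‖ :=
        le_mul_of_one_le_left (norm_nonneg _) h1
      exact pow_le_pow_left₀ (norm_nonneg _) h3 2
  have hts : ∑' n : ℤ, ‖fourierCoeff (circLift G) n‖ ^ 2
      ≤ ∑' n : ℤ, ‖fourierCoeff (circLift G') n‖ ^ 2 := Summable.tsum_le_tsum key sumC sumD
  have h2π : (0 : ℝ) < 2 * π := by positivity
  have := mul_le_mul_of_nonneg_left hts h2π.le
  rw [parC, parD] at this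
  calc ∫ x in (-π)..π, g x ^ 2 = ∫ x in (-π)..π, ‖G x‖ ^ 2 := by
        refine intervalIntegral.integral_congr fun x _ => ?_
        simp [hG, Complex.norm_real, _root_.sq_abs]
    _ ≤ ∫ x in (-π)..π, ‖G' x‖ ^ 2 := this
    _ = ∫ x in (-π)..π, g' x ^ 2 := by
        refine intervalIntegral.integral_congr fun x _ => ?_
        simp [hG', Complex.norm_real, _root_.sq_abs]

lemma periodic_deriv' {f : ℝ → ℝ} {c : ℝ} (h : Function.Periodic f c) :
    Function.Periodic (deriv f) c := by
  intro x
  have hfc : (fun y => f (y + c)) = f := funext h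
  calc deriv f (x + c) = deriv (fun y => f (y + c)) x := (deriv_comp_add_const f c x).symm
    _ = deriv f x := by rw [hfc]

/-- for `κ ≥ 1`, every bounded `C²` `2π`-periodic steady state is
`0`, `1` or `−1`. -/
theorem steady_state_trivial_kappa_ge_one (κ : ℝ) (hκ : 1 ≤ κ)
    (u : ℝ → ℝ) (hreg : ContDiff ℝ 2 u) (hbdd : ∃ C : ℝ, ∀ x : ℝ, |u x| ≤ C)
    (hper : Function.Periodic u (2 * π))
    (heq : ∀ x : ℝ, κ ^ 2 * deriv (deriv u) x + u x - u x ^ 3 = 0) :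
    (∀ x : ℝ, u x = 0) ∨ (∀ x : ℝ, u x = 1) ∨ (∀ x : ℝ, u x = -1) := by
  have hπ := Real.pi_pos
  have hle : (-π : ℝ) ≤ π := by linarith
  have h2 : ContDiff ℝ 1 (deriv u) := by
    have h' : ContDiff ℝ (1 + 1) u := by rw [one_add_one_eq_two]; exact hreg
    exact (contDiff_succ_iff_deriv.mp h').2.2
  have hu_cont : Continuous u := hreg.continuous
  have hdiff : Differentiable ℝ u := hreg.differentiable (by norm_num)
  have hd1 : ∀ x, HasDerivAt u (deriv u x) x := fun x => (hdiff x).hasDerivAt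
  have hdiff1 : Differentiable ℝ (deriv u) := h2.differentiable one_ne_zero
  have hd2 : ∀ x, HasDerivAt (deriv u) (deriv (deriv u) x) x := fun x => (hdiff1 x).hasDerivAt
  have hu1_cont : Continuous (deriv u) := h2.continuous
  have hu2_cont : Continuous (deriv (deriv u)) := h2.continuous_deriv le_rfl
  have hper1 : Function.Periodic (deriv u) (2 * π) := periodic_deriv' hper
  have hper2 : Function.Periodic (deriv (deriv u)) (2 * π) := periodic_deriv' hper1
  have huπ : u π = u (-π) := by rw [← hper (-π)]; congr 1; ring
  have huπ1 : deriv u π = deriv u (-π) := by rw [← hper1 (-π)]; congr 1; ring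
  have hmean : ∫ x in (-π)..π, deriv u x = 0 := by
    rw [intervalIntegral.integral_deriv_eq_sub (fun x _ => hdiff x)
      (hu1_cont.intervalIntegrable _ _), huπ, sub_self]
  have W := wirtinger hu1_cont hu2_cont hd2 hper1 hper2 hmean
  -- integration by parts identity
  have hFd : ∀ x, HasDerivAt (fun y => u y ^ 3 - u y)
      (3 * u x ^ 2 * deriv u x - deriv u x) x := by
    intro x
    have h3 := ((hd1 x).pow 3).sub (hd1 x)
    exact h3.congr_deriv (by norm_num)
  have hIBP := intervalIntegral.integral_mul_deriv_eq_deriv_mul (a := -π) (b := π)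
    (u := fun y => u y ^ 3 - u y) (v := deriv u)
    (u' := fun x => 3 * u x ^ 2 * deriv u x - deriv u x) (v' := deriv (deriv u))
    (fun x _ => hFd x) (fun x _ => hd2 x)
    (((((continuous_const.mul (hu_cont.pow 2)).mul hu1_cont).sub
      hu1_cont)).intervalIntegrable _ _)
    (hu2_cont.intervalIntegrable _ _)
  beta_reduce at hIBP
  rw [huπ, huπ1, sub_self] at hIBP
  -- LHS is κ² ∫ u''²
  have hL : ∫ x in (-π)..π, (u x ^ 3 - u x) * deriv (deriv u) x
      = κ ^ 2 * ∫ x in (-π)..π, deriv (deriv u) x ^ 2 := by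
    rw [← intervalIntegral.integral_const_mul]
    refine intervalIntegral.integral_congr fun x _ => ?_
    have h := heq x
    rw [show u x ^ 3 - u x = κ ^ 2 * deriv (deriv u) x by linarith]
    ring
  -- RHS integral is 3 J - I1
  have hR : ∫ x in (-π)..π, (3 * u x ^ 2 * deriv u x - deriv u x) * deriv u x
      = 3 * (∫ x in (-π)..π, u x ^ 2 * deriv u x ^ 2) - ∫ x in (-π)..π, deriv u x ^ 2 := by
    have e1 : ∀ x ∈ uIcc (-π) π, (3 * u x ^ 2 * deriv u x - deriv u x) * deriv u x
        = 3 * (u x ^ 2 * deriv u x ^ 2) - deriv u x ^ 2 := fun x _ => by ring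
    rw [intervalIntegral.integral_congr e1, intervalIntegral.integral_sub
      ((show Continuous (fun x => 3 * (u x ^ 2 * deriv u x ^ 2)) from continuous_const.mul ((hu_cont.pow 2).mul (hu1_cont.pow 2))).intervalIntegrable _ _)
      ((show Continuous (fun x => deriv u x ^ 2) from hu1_cont.pow 2).intervalIntegrable _ _), intervalIntegral.integral_const_mul]
  rw [hL, hR] at hIBP
  set I1 := ∫ x in (-π)..π, deriv u x ^ 2 with hI1
  set I2 := ∫ x in (-π)..π, deriv (deriv u) x ^ 2 with hI2
  set J := ∫ x in (-π)..π, u x ^ 2 * deriv u x ^ 2 with hJ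
  have I2nonneg : 0 ≤ I2 :=
    intervalIntegral.integral_nonneg hle (fun x _ => sq_nonneg _)
  have Jnonneg : 0 ≤ J :=
    intervalIntegral.integral_nonneg hle
      (fun x _ => mul_nonneg (sq_nonneg _) (sq_nonneg _))
  have hκ2 : 1 ≤ κ ^ 2 := one_le_pow₀ hκ
  -- κ² I2 = I1 - 3 J ; I1 ≤ I2 ≤ κ² I2  ⟹  J ≤ 0
  have hJ0 : J = 0 := by
    nlinarith [mul_le_mul_of_nonneg_right hκ2 I2nonneg]
  -- pointwise vanishing of u * u'
  have hzeroIoc : ∀ x ∈ Ioc (-π) π, u x * deriv u x = 0 := by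
    intro x hx
    have hcont : Continuous fun x => u x ^ 2 * deriv u x ^ 2 :=
      (hu_cont.pow 2).mul (hu1_cont.pow 2)
    have hint0 : ∫ x in Ioc (-π) π, u x ^ 2 * deriv u x ^ 2 = 0 := by
      rw [← intervalIntegral.integral_of_le hle]
      exact hJ0.symm ▸ rfl
    have hae := (MeasureTheory.integral_eq_zero_iff_of_nonneg_ae
      (Filter.Eventually.of_forall fun x => mul_nonneg (sq_nonneg _) (sq_nonneg _))
      ((hcont.integrableOn_Ioc))).mp hint0
    have heqOn := MeasureTheory.Measure.eqOn_Ioc_of_ae_eq (μ := volume) hae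
      hcont.continuousOn continuousOn_const
    have hx0 : u x ^ 2 * deriv u x ^ 2 = 0 := heqOn hx
    have : (u x * deriv u x) ^ 2 = 0 := by rw [mul_pow]; exact hx0
    exact pow_eq_zero_iff (two_ne_zero) |>.mp this
  have hzero : ∀ x : ℝ, u x * deriv u x = 0 := by
    intro x
    have hp : (0 : ℝ) < 2 * π := by positivity
    have hmem : toIocMod hp (-π) x ∈ Ioc (-π) (-π + 2 * π) := toIocMod_mem_Ioc _ _ x
    have hmem' : toIocMod hp (-π) x ∈ Ioc (-π) π := by
      rwa [show -π + 2 * π = π by ring] at hmem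
    have hperφ : u (toIocMod hp (-π) x) * deriv u (toIocMod hp (-π) x)
        = u x * deriv u x := by
      rw [toIocMod, Function.Periodic.sub_zsmul_eq hper,
        Function.Periodic.sub_zsmul_eq hper1]
    rw [← hperφ]
    exact hzeroIoc _ hmem'
  -- u² is constant
  have hconst : ∀ x y : ℝ, u x ^ 2 = u y ^ 2 := by
    apply is_const_of_deriv_eq_zero (hdiff.pow 2)
    intro x
    have : HasDerivAt (fun y => u y ^ 2) (2 * u x * deriv u x) x := by
      have := (hd1 x).pow 2
      exact this.congr_deriv (by norm_num)
    change deriv (fun y => u y ^ 2) x = 0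
    rw [this.deriv, mul_assoc, hzero x, mul_zero]
  rcases eq_or_ne (u 0) 0 with h0 | h0
  · left
    intro x
    have hx := hconst x 0
    rw [h0] at hx
    simpa [pow_eq_zero_iff] using hx
  · have hne : ∀ x, u x ≠ 0 := by
      intro x hx
      have := hconst 0 x
      rw [hx] at this
      exact h0 (by simpa [pow_eq_zero_iff] using this)
    have hsame : ∀ x : ℝ, u x = u 0 := by
      intro x
      have hsq : u x ^ 2 = u 0 ^ 2 := hconst x 0
      have hfac : (u x - u 0) * (u x + u 0) = 0 := by nlinarith
      rcases mul_eq_zero.mp hfac with h | h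
      · linarith
      · -- u x = - u 0 : contradiction via IVT
        exfalso
        have hopp : u x = -u 0 := by linarith
        have h0mem : (0 : ℝ) ∈ uIcc (u 0) (u x) := by
          rw [hopp]
          rcases lt_or_gt_of_ne h0 with hneg | hpos
          · exact mem_uIcc.mpr (Or.inl ⟨hneg.le, by linarith⟩)
          · exact mem_uIcc.mpr (Or.inr ⟨by linarith, hpos.le⟩)
        obtain ⟨c, _, hc⟩ := intermediate_value_uIcc (hu_cont.continuousOn (s := uIcc 0 x)) h0mem
        exact hne c hc
    have hu_eq : u = fun _ => u 0 := funext hsame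
    have hd0 : deriv (deriv u) 0 = 0 := by rw [hu_eq]; simp
    have h00 := heq 0
    rw [hd0, mul_zero, zero_add] at h00
    have hfac : u 0 * (u 0 - 1) * (u 0 + 1) = 0 := by nlinarith
    rcases mul_eq_zero.mp hfac with h | h
    · rcases mul_eq_zero.mp h with h' | h'
      · exact absurd h' h0
      · right; left; intro x; rw [hsame x]; linarith
    · right; right; intro x; rw [hsame x]; linarith
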